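/- arXiv:2102.02273 — 3 statements merged into one kernel-verified Lean document; each statement's English description precedes it below -/
import Mathlib

section
/- For all real x and u, u = sat(x) := min(max(x,−1),1) if and only if there exists λ ∈ ℝ such that u ≥ −1, u ≤ 1, u ≥ x − λ, λ ≥ 0, (u−1)·λ = 0, and (−u−1)·(u − x + λ) = 0. -/
theorem sat_graph (x u : ℝ) :
    u = min (max x (-1)) 1 ↔
      ∃ l : ℝ, u ≥ -1 ∧ u ≤ 1 ∧ u ≥ x - l ∧ l ≥ 0 ∧
        (u - 1) * l = 0 ∧ (-u - 1) * (u - x + l) = 0 := by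
  constructor
  · intro h
    rcases le_total x (-1) with hx | hx
    · have hu : u = -1 := by
        rw [h, max_eq_right hx, min_eq_left (by norm_num)]
      refine ⟨0, ?_, ?_, ?_, ?_, ?_, ?_⟩ <;> subst hu <;> first | linarith | ring
    · rcases le_total 1 x with hx1 | hx1
      · have hu : u = 1 := by
          rw [h, min_eq_right (le_trans hx1 (le_max_left _ _))]
        refine ⟨x - 1, ?_, ?_, ?_, ?_, ?_, ?_⟩ <;> subst hu <;>
          first | linarith | ring
      · have hu : u = x := by
          rw [h, max_eq_left hx, min_eq_left hx1]
        refine ⟨0, ?_, ?_, ?_, ?_, ?_, ?_⟩ <;> subst hu <;>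
          first | linarith | ring
  · rintro ⟨l, h1, h2, h3, h4, h5, h6⟩
    rcases mul_eq_zero.mp h5 with hu1 | hl <;>
      rcases mul_eq_zero.mp h6 with hu2 | hux
    · linarith
    · have hu : u = 1 := by linarith
      have hx : x ≥ 1 := by nlinarith
      rw [hu, min_eq_right (le_trans hx (le_max_left _ _))]
    · have hu : u = -1 := by linarith
      have hx : x ≤ -1 := by linarith
      rw [hu, max_eq_right hx, min_eq_left (by norm_num)]
    · have hu : u = x := by rw [hl] at hux; linarith
      rw [hu] at h1 h2 ⊢
      rw [max_eq_left (by linarith), min_eq_left (by linarith)]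
end

section
/- Let f : ℝⁿ → ℝⁿ be Lipschitz on a compact set X ⊆ ℝⁿ with Lipschitz constant L and f(0) = 0, 0 ∈ X. Let W : ℝⁿ → ℝ satisfy W(f(x)) − W(x) ≤ −‖x‖² and W(x) ≥ ‖x‖² for all x ∈ ℝⁿ. Suppose V : ℝⁿ → ℝ satisfies |W(x) − V(x)| ≤ ε‖x‖² for all x ∈ X ∪ f(X), where ε(1 + L²) < 1. Then V(f(x)) − V(x) ≤ −(1 − ε(1+L²))‖x‖² and V(x) ≥ (1−ε)‖x‖² for all x ∈ X. -/
theorem lyapunov_perturbation {n : ℕ}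
    (X : Set (EuclideanSpace ℝ (Fin n))) (hX : IsCompact X) (h0X : (0 : EuclideanSpace ℝ (Fin n)) ∈ X)
    (f : EuclideanSpace ℝ (Fin n) → EuclideanSpace ℝ (Fin n))
    (L : ℝ)
    (hLip : ∀ x ∈ X, ∀ y ∈ X, ‖f x - f y‖ ≤ L * ‖x - y‖)
    (hf0 : f 0 = 0)
    (W V : EuclideanSpace ℝ (Fin n) → ℝ)
    (hWdec : ∀ x, W (f x) - W x ≤ -‖x‖ ^ 2)
    (hWlb : ∀ x, W x ≥ ‖x‖ ^ 2)
    (ε : ℝ)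
    (happrox : ∀ x ∈ X ∪ f '' X, |W x - V x| ≤ ε * ‖x‖ ^ 2)
    (hε : ε * (1 + L ^ 2) < 1) :
    ∀ x ∈ X, V (f x) - V x ≤ -(1 - ε * (1 + L ^ 2)) * ‖x‖ ^ 2 ∧
      V x ≥ (1 - ε) * ‖x‖ ^ 2 := by
  intro x hx
  have hxU : x ∈ X ∪ f '' X := Or.inl hx
  have hfxU : f x ∈ X ∪ f '' X := Or.inr ⟨x, hx, rfl⟩
  have h1a := abs_le.mp (happrox x hxU)
  have h2a := abs_le.mp (happrox (f x) hfxU)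
  have hfx : ‖f x‖ ≤ L * ‖x‖ := by
    have := hLip x hx 0 h0X
    simpa [hf0] using this
  have hfn : (0:ℝ) ≤ ‖f x‖ := norm_nonneg _
  have hxn : (0:ℝ) ≤ ‖x‖ := norm_nonneg _
  have hfx2 : ‖f x‖ ^ 2 ≤ L ^ 2 * ‖x‖ ^ 2 := by nlinarith
  rcases le_or_gt 0 ε with hε0 | hε0
  · refine ⟨?_, ?_⟩
    · have hd := hWdec x
      nlinarith [mul_le_mul_of_nonneg_left hfx2 hε0, h1a.1, h2a.2]
    · have := hWlb x
      nlinarith [h1a.1, h1a.2]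
  · -- ε < 0 forces x = 0
    have hxz : ‖x‖ = 0 := by
      by_contra h
      have hpos : 0 < ‖x‖ ^ 2 := by positivity
      have : ε * ‖x‖ ^ 2 < 0 := mul_neg_of_neg_of_pos hε0 hpos
      have habs : (0:ℝ) ≤ |W x - V x| := abs_nonneg _
      linarith [happrox x hxU]
    have hx0 : x = 0 := norm_eq_zero.mp hxz
    subst hx0
    have hfz : f 0 = 0 := hf0
    rw [hfz]
    have hWV : W 0 = V 0 := by
      have := happrox 0 hxU
      simp at this
      linarith
    have hW0 : W 0 ≥ 0 := by simpa using hWlb 0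
    constructor
    · simp
    · simp [← hWV, hW0]
end

section
/- Let f : ℝⁿ → ℝⁿ be continuous with f(0) = 0 and Lipschitz on a compact set X containing 0. Suppose there exists W ∈ C²(ℝⁿ) with W(f(x)) − W(x) ≤ −‖x‖² and W(x) ≥ ‖x‖² for all x. Then there exist a polynomial V and constants α, β > 0 such that V(f(x)) − V(x) ≤ −α‖x‖² and V(x) ≥ β‖x‖² for all x ∈ X. -/
set_option maxHeartbeats 1000000

open Filter Metric

lemma taylor2 {E : Type*} [NormedAddCommGroup E] [NormedSpace ℝ E] (W : E → ℝ)
    (hW : ContDiff ℝ 2 W) {ε : ℝ} (hε : 0 < ε) :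
    ∃ δ > 0, ∀ x : E, ‖x‖ ≤ δ →
      |W x - W 0 - fderiv ℝ W 0 x - (fderiv ℝ (fderiv ℝ W) 0 x) x / 2| ≤ ε * ‖x‖^2 := by
  set f' := fderiv ℝ W with hf'def
  set D := f' 0
  set B := fderiv ℝ f' 0 with hBdef
  have hWd : Differentiable ℝ W := hW.differentiable (by norm_num)
  have hf'c : ContDiff ℝ 1 f' := hW.fderiv_right (le_refl 2)
  have hB : HasFDerivAt f' B 0 := (hf'c.differentiable one_ne_zero 0).hasFDerivAt
  have hsymm : ∀ v w : E, B v w = B w v :=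
    second_derivative_symmetric (fun y => (hWd y).hasFDerivAt) hB
  -- derivative of ψ
  set ψ : E → ℝ := fun y => W y - D y - (B y) y / 2 with hψdef
  have hψ : ∀ y : E, HasFDerivAt ψ (f' y - D - B y) y := by
    intro y
    have h1 : HasFDerivAt W (f' y) y := (hWd y).hasFDerivAt
    have h3 : HasFDerivAt (fun z : E => (B z) z)
        (B.precompR E y (ContinuousLinearMap.id ℝ E)
          + B.precompL E (ContinuousLinearMap.id ℝ E) y) y :=
      B.hasFDerivAt_of_bilinear (hasFDerivAt_id y) (hasFDerivAt_id y)
    have h3' : HasFDerivAt (fun z : E => (B z) z / 2)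
        ((2⁻¹ : ℝ) • (B.precompR E y (ContinuousLinearMap.id ℝ E)
          + B.precompL E (ContinuousLinearMap.id ℝ E) y)) y := by
      have := h3.const_smul (2⁻¹ : ℝ)
      exact this.congr_of_eventuallyEq (Filter.Eventually.of_forall fun z => by simp [div_eq_inv_mul])
    have h4 := (h1.sub (D.hasFDerivAt (x := y))).sub h3'
    refine h4.congr_fderiv ?_
    ext v
    have hs := hsymm v y
    simp only [ContinuousLinearMap.coe_sub', Pi.sub_apply,
      ContinuousLinearMap.coe_smul', Pi.smul_apply,
      ContinuousLinearMap.add_apply,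
      ContinuousLinearMap.precompR_apply, ContinuousLinearMap.precompL_apply,
      ContinuousLinearMap.compL_apply, ContinuousLinearMap.comp_apply,
      ContinuousLinearMap.coe_id', id_eq, smul_eq_mul]
    rw [hs]
    ring
  -- little-o bound on the derivative
  have hlo : (fun h : E => f' (0 + h) - f' 0 - B h) =o[nhds 0] fun h => h :=
    hasFDerivAt_iff_isLittleO_nhds_zero.1 hB
  have hev : ∀ᶠ y in nhds (0 : E), ‖f' y - D - B y‖ ≤ ε * ‖y‖ := by
    have := hlo.def hε
    filter_upwards [this] with y hy
    simpa using hy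
  rcases Metric.eventually_nhds_iff.1 hev with ⟨δ, hδ, hball⟩
  refine ⟨δ/2, by positivity, fun x hx => ?_⟩
  have key : ‖ψ x - ψ 0‖ ≤ ε * ‖x‖ * ‖x - 0‖ := by
    apply Convex.norm_image_sub_le_of_norm_hasFDerivWithin_le
      (fun y _ => (hψ y).hasFDerivWithinAt)
      (fun y hy => ?_) (convex_closedBall (0:E) ‖x‖)
      (mem_closedBall_self (norm_nonneg x)) (by simp [mem_closedBall])
    · have hyx : ‖y‖ ≤ ‖x‖ := by simpa [mem_closedBall, dist_eq_norm] using hy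
      have : dist y 0 < δ := by
        rw [dist_eq_norm, sub_zero]
        calc ‖y‖ ≤ ‖x‖ := hyx
        _ ≤ δ/2 := hx
        _ < δ := by linarith
      calc ‖f' y - D - B y‖ ≤ ε * ‖y‖ := hball this
      _ ≤ ε * ‖x‖ := by nlinarith [norm_nonneg y, norm_nonneg x]
  have hψ0 : ψ 0 = W 0 := by simp [hψdef]
  rw [hψ0, sub_zero] at key
  calc |W x - W 0 - D x - (B x) x / 2| = ‖ψ x - W 0‖ := by
        rw [Real.norm_eq_abs]; simp only [hψdef]; ring_nf
  _ ≤ ε * ‖x‖ * ‖x‖ := key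
  _ = ε * ‖x‖^2 := by ring

theorem converse_polynomial_lyapunov {n : ℕ}
    (f : EuclideanSpace ℝ (Fin n) → EuclideanSpace ℝ (Fin n))
    (hf : Continuous f) (hf0 : f 0 = 0)
    (X : Set (EuclideanSpace ℝ (Fin n))) (hX : IsCompact X)
    (h0X : (0 : EuclideanSpace ℝ (Fin n)) ∈ X)
    (L : ℝ) (hLip : ∀ x ∈ X, ∀ y ∈ X, ‖f x - f y‖ ≤ L * ‖x - y‖)
    (W : EuclideanSpace ℝ (Fin n) → ℝ)
    (hW : ContDiff ℝ 2 W)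
    (hWdec : ∀ x, W (f x) - W x ≤ -‖x‖ ^ 2)
    (hWlb : ∀ x, W x ≥ ‖x‖ ^ 2) :
    ∃ (p : MvPolynomial (Fin n) ℝ) (α β : ℝ), 0 < α ∧ 0 < β ∧
      ∀ x ∈ X,
        MvPolynomial.eval (f x) p - MvPolynomial.eval x p ≤ -α * ‖x‖ ^ 2 ∧
        MvPolynomial.eval x p ≥ β * ‖x‖ ^ 2 := by
  classical
  set D : EuclideanSpace ℝ (Fin n) →L[ℝ] ℝ := fderiv ℝ W 0 with hDdef
  set B : EuclideanSpace ℝ (Fin n) →L[ℝ] EuclideanSpace ℝ (Fin n) →L[ℝ] ℝ := fderiv ℝ (fderiv ℝ W) 0 with hBdef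
  set ψ₀ : EuclideanSpace ℝ (Fin n) → ℝ := fun x => W x - W 0 - D x - (B x) x / 2 with hψ₀def
  set u : EuclideanSpace ℝ (Fin n) → ℝ := fun x => if x = 0 then 0 else ψ₀ x / ‖x‖^2 with hudef
  have hψ₀0 : ψ₀ 0 = 0 := by simp [hψ₀def]
  have hu0 : ∀ x : EuclideanSpace ℝ (Fin n), ψ₀ x = u x * ‖x‖^2 := by
    intro x
    by_cases hx : x = 0
    · simp [hx, hψ₀0, hudef]
    · have : ‖x‖^2 ≠ 0 := pow_ne_zero 2 (norm_ne_zero_iff.mpr hx)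
      simp [hudef, hx, div_mul_cancel₀ _ this]
  have hψ₀cont : Continuous ψ₀ := by
    refine ((hW.continuous.sub continuous_const).sub D.continuous).sub ?_
    exact (B.isBoundedBilinearMap.continuous.comp (continuous_id.prodMk continuous_id)).div_const 2
  -- continuity of u
  have hucont : Continuous u := by
    rw [continuous_iff_continuousAt]
    intro x
    by_cases hx : x = 0
    · subst hx
      rw [ContinuousAt, Metric.tendsto_nhds_nhds]
      intro ε hε
      obtain ⟨δ, hδ, hδtay⟩ := taylor2 W hW (half_pos hε)
      refine ⟨δ, hδ, fun {y} hy => ?_⟩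
      have hu0' : u 0 = 0 := by simp [hudef]
      rw [hu0', Real.dist_eq, sub_zero]
      by_cases hy0 : y = 0
      · simp [hy0, hudef]; exact hε
      · have hyδ : ‖y‖ ≤ δ := by
          rw [dist_eq_norm, sub_zero] at hy; exact hy.le
        have := hδtay y hyδ
        have hn : (0:ℝ) < ‖y‖^2 := pow_pos (norm_pos_iff.mpr hy0) 2
        have : |ψ₀ y| ≤ ε/2 * ‖y‖^2 := this
        have : |u y| ≤ ε/2 := by
          rw [hudef]
          simp only [hy0, if_false]
          rw [abs_div, abs_of_pos hn, div_le_iff₀ hn]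
          exact this
        linarith [this]
    · have hne : ∀ᶠ y in nhds x, y ≠ (0:EuclideanSpace ℝ (Fin n)) := by
        exact eventually_ne_nhds hx
      have hcongr : u =ᶠ[nhds x] fun y => ψ₀ y / ‖y‖^2 := by
        filter_upwards [hne] with y hy
        simp [hudef, hy]
      refine ContinuousAt.congr ?_ hcongr.symm
      exact ContinuousAt.div (hψ₀cont.continuousAt)
        ((continuous_norm.pow 2).continuousAt) (pow_ne_zero 2 (norm_ne_zero_iff.mpr hx))
  -- the compact set K
  set K : Set (EuclideanSpace ℝ (Fin n)) := X ∪ f '' X with hKdef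
  have hK : IsCompact K := hX.union (hX.image hf)
  haveI : CompactSpace K := isCompact_iff_compactSpace.mp hK
  -- ε
  set ε : ℝ := 1 / (2 * (1 + L^2)) with hεdef
  have hL2 : (0:ℝ) < 1 + L^2 := by positivity
  have hε : 0 < ε := by positivity
  have hεval : ε * (1 + L^2) = 1/2 := by
    rw [hεdef, div_mul_eq_mul_div, one_mul, div_eq_div_iff (by positivity) (by norm_num)]
    ring
  have hεhalf : ε ≤ 1/2 := by
    rw [hεdef, div_le_div_iff₀ (by positivity) (by norm_num)]
    nlinarith
  -- Stone-Weierstrass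
  set coords : Fin n → C(K, ℝ) := fun i =>
    ⟨fun z : K => (z : EuclideanSpace ℝ (Fin n)) i, (continuous_apply i).comp ((PiLp.continuous_ofLp 2 _).comp continuous_subtype_val)⟩ with hcoords
  set A : Subalgebra ℝ C(K, ℝ) := Algebra.adjoin ℝ (Set.range coords) with hAdef
  have hsep : A.SeparatesPoints := by
    intro x y hxy
    have hne : (x : EuclideanSpace ℝ (Fin n)) ≠ (y : EuclideanSpace ℝ (Fin n)) := fun h => hxy (Subtype.ext h)
    have : ∃ i, (x : EuclideanSpace ℝ (Fin n)) i ≠ (y : EuclideanSpace ℝ (Fin n)) i := by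
      by_contra h
      push_neg at h
      exact hne (WithLp.ofLp_injective 2 (funext h))
    obtain ⟨i, hi⟩ := this
    exact ⟨⇑(coords i), ⟨coords i, Algebra.subset_adjoin (Set.mem_range_self i), rfl⟩, hi⟩
  obtain ⟨g, hg⟩ := ContinuousMap.exists_mem_subalgebra_near_continuous_of_separatesPoints
    A hsep (fun z : K => u z) (hucont.comp continuous_subtype_val) ε hε
  -- extract the polynomial
  have hgA : (g : C(K, ℝ)) ∈ Algebra.adjoin ℝ (Set.range coords) := g.2
  rw [Algebra.adjoin_range_eq_range_aeval ℝ coords] at hgA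
  obtain ⟨q, hq⟩ := hgA
  have haeval : ∀ (r : MvPolynomial (Fin n) ℝ) (z : K),
      (MvPolynomial.aeval coords r) z = MvPolynomial.eval ((z : EuclideanSpace ℝ (Fin n)) : Fin n → ℝ) r := by
    intro r
    induction r using MvPolynomial.induction_on with
    | C a => intro z; simp [MvPolynomial.aeval_C, Algebra.algebraMap_eq_smul_one]
    | add p₁ p₂ h1 h2 => intro z; simp [h1, h2]
    | mul_X p₁ i h1 => intro z; rw [hcoords] at h1; simp [h1, hcoords]
  have hq' : ∀ z : K, (g : C(K, ℝ)) z = MvPolynomial.eval ((z : EuclideanSpace ℝ (Fin n)) : Fin n → ℝ) q := by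
    intro z; rw [← hq]; exact haeval q z
  have hqu : ∀ z ∈ K, |MvPolynomial.eval (z : Fin n → ℝ) q - u z| ≤ ε := by
    intro z hz
    have := hg ⟨z, hz⟩
    rw [hq' ⟨z, hz⟩] at this
    exact le_of_lt (by simpa [Real.norm_eq_abs] using this)
  -- basis decomposition
  set e : Fin n → EuclideanSpace ℝ (Fin n) := fun i => EuclideanSpace.single i (1:ℝ) with hedef
  have hdecomp : ∀ x : EuclideanSpace ℝ (Fin n), x = ∑ i, x i • e i := by
    intro x
    have := (EuclideanSpace.basisFun (Fin n) ℝ).sum_repr x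
    simpa [hedef, EuclideanSpace.basisFun_apply, EuclideanSpace.basisFun_repr] using this.symm
  have hnorm : ∀ x : EuclideanSpace ℝ (Fin n), ‖x‖^2 = ∑ i, (x i)^2 := by
    intro x
    rw [EuclideanSpace.norm_eq, Real.sq_sqrt (by positivity)]
    simp [sq_abs]
  have hT : ∀ (T : EuclideanSpace ℝ (Fin n) →L[ℝ] ℝ) (x : EuclideanSpace ℝ (Fin n)),
      T x = ∑ i, x i * T (e i) := by
    intro T x
    conv_lhs => rw [hdecomp x]
    rw [map_sum]
    simp [smul_eq_mul]
  have hD : ∀ x : EuclideanSpace ℝ (Fin n), D x = ∑ i, x i * D (e i) := fun x => hT D x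
  have hB2 : ∀ x : EuclideanSpace ℝ (Fin n), (B x) x = ∑ i, ∑ j, x i * x j * (B (e i)) (e j) := by
    intro x
    calc (B x) x = ∑ i, x i * (B x) (e i) := hT (B x) x
    _ = ∑ i, x i * ∑ j, x j * (B (e j)) (e i) := by
        refine Finset.sum_congr rfl fun i _ => ?_
        congr 1
        have h := hT (B.flip (e i)) x
        simpa [ContinuousLinearMap.flip_apply] using h
    _ = ∑ i, ∑ j, x i * x j * (B (e i)) (e j) := by
        simp_rw [Finset.mul_sum]
        rw [Finset.sum_comm]
        refine Finset.sum_congr rfl fun a _ => Finset.sum_congr rfl fun b _ => by ring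
  -- the final polynomial
  set p : MvPolynomial (Fin n) ℝ :=
    MvPolynomial.C (W 0) + (∑ i, MvPolynomial.C (D (e i)) * MvPolynomial.X i)
      + MvPolynomial.C (2⁻¹ : ℝ) *
        (∑ i, ∑ j, MvPolynomial.C ((B (e i)) (e j)) * MvPolynomial.X i * MvPolynomial.X j)
      + q * (∑ i, MvPolynomial.X i ^ 2) with hpdef
  have heval : ∀ z : EuclideanSpace ℝ (Fin n), MvPolynomial.eval (z : Fin n → ℝ) p
      = W 0 + D z + (B z) z / 2 + MvPolynomial.eval (z : Fin n → ℝ) q * ‖z‖^2 := by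
    intro z
    rw [hpdef]
    simp only [map_add, map_mul, map_sum, MvPolynomial.eval_C, MvPolynomial.eval_X,
      MvPolynomial.eval_pow]
    rw [hD z, hB2 z, hnorm z]
    have e1 : ∑ i, D (e i) * z i = ∑ i, z i * D (e i) :=
      Finset.sum_congr rfl fun i _ => mul_comm _ _
    have e2 : (∑ i, ∑ j, (B (e i)) (e j) * z i * z j)
        = ∑ i, ∑ j, z i * z j * (B (e i)) (e j) :=
      Finset.sum_congr rfl fun i _ => Finset.sum_congr rfl fun j _ => by ring
    rw [e1, e2]
    ring
  -- the key approximation property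
  have hkey : ∀ z ∈ K, |MvPolynomial.eval (z : Fin n → ℝ) p - W z| ≤ ε * ‖z‖^2 := by
    intro z hz
    have h1 : W z = W 0 + D z + (B z) z / 2 + u z * ‖z‖^2 := by
      have := hu0 z
      rw [hψ₀def] at this
      simp only at this
      linarith [this]
    rw [heval z, h1]
    have h2 : W 0 + D z + (B z) z / 2 + MvPolynomial.eval (z : Fin n → ℝ) q * ‖z‖ ^ 2 -
        (W 0 + D z + (B z) z / 2 + u z * ‖z‖ ^ 2)
        = (MvPolynomial.eval (z : Fin n → ℝ) q - u z) * ‖z‖^2 := by ring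
    rw [h2, abs_mul, abs_of_nonneg (by positivity : (0:ℝ) ≤ ‖z‖^2)]
    exact mul_le_mul_of_nonneg_right (hqu z hz) (by positivity)
  -- conclusion
  refine ⟨p, 1/2, 1/2, by norm_num, by norm_num, fun x hx => ?_⟩
  have hxK : x ∈ K := Or.inl hx
  have hfxK : f x ∈ K := Or.inr ⟨x, hx, rfl⟩
  have hfxn : ‖f x‖ ≤ L * ‖x‖ := by
    have := hLip x hx 0 h0X
    simpa [hf0] using this
  have hfx2 : ‖f x‖^2 ≤ L^2 * ‖x‖^2 := by
    nlinarith [norm_nonneg (f x), norm_nonneg x]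
  have h1 := abs_le.mp (hkey (f x) hfxK)
  have h2 := abs_le.mp (hkey x hxK)
  have h3 := hWdec x
  have h4 := hWlb x
  have ha : ε * ‖f x‖^2 ≤ ε * (L^2 * ‖x‖^2) := mul_le_mul_of_nonneg_left hfx2 hε.le
  have hb : ε * (L^2 * ‖x‖^2) + ε * ‖x‖^2 = (1/2) * ‖x‖^2 := by
    linear_combination (‖x‖^2) * hεval
  have hc : ε * ‖x‖^2 ≤ (1/2) * ‖x‖^2 :=
    mul_le_mul_of_nonneg_right hεhalf (by positivity)
  constructor
  · linarith [h1.2, h2.1, h3, ha, hb]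
  · linarith [h2.1, h4, hc]
end
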